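/- Let H be a Pommaret basis of a quasi-stable ideal I and let b map each monomial of I to its unique involutive divisor in H. Then for every monomial m ∈ I and every variable x_k, b(x_k·m) has class at least cls(b(m)). -/
import Mathlib


/-- The class of an exponent vector: the least index with nonzero exponent. -/
noncomputable def cls {n : ℕ} (μ : Fin n → ℕ) : ℕ := sInf {i : ℕ | ∃ hi : i < n, μ ⟨i, hi⟩ ≠ 0}

/-- Pommaret involutive divisibility: `μ` divides `ν` and the quotient only
involves the multiplicative variables `x_1, …, x_{cls μ}` of `μ`. -/
def InvDvd {n : ℕ} (μ ν : Fin n → ℕ) : Prop :=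
  (∀ i, μ i ≤ ν i) ∧ ∀ i : Fin n, cls μ < (i : ℕ) → ν i = μ i

/-- Membership of a monomial in the monomial ideal generated by `H`. -/
def MemMonIdeal {n : ℕ} (H : Set (Fin n → ℕ)) (ν : Fin n → ℕ) : Prop :=
  ∃ h ∈ H, ∀ i, h i ≤ ν i

/-- If an index is strictly below the class, the exponent there vanishes. -/
lemma zero_of_lt_cls {n : ℕ} (μ : Fin n → ℕ) (i : Fin n) (h : (i : ℕ) < cls μ) : μ i = 0 := by
  by_contra hne
  have hmem : (i : ℕ) ∈ {j : ℕ | ∃ hj : j < n, μ ⟨j, hj⟩ ≠ 0} := ⟨i.isLt, by simpa using hne⟩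
  have hle : cls μ ≤ (i : ℕ) := Nat.sInf_le hmem
  omega

/-- If `μ` is nonzero, its class is a genuine index with nonzero exponent. -/
lemma cls_spec {n : ℕ} (μ : Fin n → ℕ) (j : Fin n) (hj : μ j ≠ 0) :
    ∃ h : cls μ < n, μ ⟨cls μ, h⟩ ≠ 0 :=
  Nat.sInf_mem (⟨(j : ℕ), j.isLt, by simpa using hj⟩ :
    {i : ℕ | ∃ hi : i < n, μ ⟨i, hi⟩ ≠ 0}.Nonempty)

/-- For a Pommaret basis H, a monomial m of the ideal and any variable x_k,
the class of the unique involutive divisor of x_k · m is at least the class of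
the unique involutive divisor of m. -/
theorem cls_invDvd_mul_ge {n : ℕ} (H : Finset (Fin n → ℕ))
    (hPB : ∀ ν, MemMonIdeal ↑H ν → ∃! g, g ∈ H ∧ InvDvd g ν)
    (m : Fin n → ℕ) (hm : MemMonIdeal ↑H m) (k : Fin n)
    (g g' : Fin n → ℕ) (hg : g ∈ H) (hg' : g' ∈ H)
    (hdm : InvDvd g m)
    (hdm' : InvDvd g' (fun i => if i = k then m i + 1 else m i)) :
    cls g ≤ cls g' := by
  classical
  set m' : Fin n → ℕ := fun i => if i = k then m i + 1 else m i with hm'def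
  have hm'ge : ∀ i, m i ≤ m' i := by
    intro i; simp only [hm'def]; split <;> omega
  have hm'I : MemMonIdeal ↑H m' := by
    obtain ⟨h, hh, hle⟩ := hm
    exact ⟨h, hh, fun i => (hle i).trans (hm'ge i)⟩
  by_cases hk : (k : ℕ) ≤ cls g
  · -- x_k is multiplicative for g, so g also involutively divides m'
    have hgm' : InvDvd g m' := by
      refine ⟨fun i => (hdm.1 i).trans (hm'ge i), fun i hi => ?_⟩
      have hik : i ≠ k := by
        intro h; subst h; omega
      simp only [hm'def, if_neg hik]
      exact hdm.2 i hi
    have := (hPB m' hm'I).unique ⟨hg, hgm'⟩ ⟨hg', hdm'⟩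
    rw [this]
  · push_neg at hk
    by_contra hlt
    push_neg at hlt  -- cls g' < cls g < k
    -- g' has nonzero exponent at k
    have hg'k : g' k = m' k := (hdm'.2 k (by omega)).symm
    have hm'k : 1 ≤ m' k := by simp [hm'def]
    have hg'ne : g' k ≠ 0 := by omega
    obtain ⟨hq'n, hq'ne⟩ := cls_spec g' k hg'ne
    -- the truncated monomial ν
    set ν : Fin n → ℕ := fun i => if (i : ℕ) ≤ cls g' then 0 else m' i with hνdef
    have hνle : ∀ i, ν i ≤ m' i := by
      intro i; simp only [hνdef]; split <;> omega
    have hgν : ∀ i, g i ≤ ν i := by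
      intro i
      simp only [hνdef]
      split
      · have : g i = 0 := zero_of_lt_cls g i (by omega)
        omega
      · exact (hdm.1 i).trans (hm'ge i)
    have hνI : MemMonIdeal ↑H ν := ⟨g, hg, hgν⟩
    obtain ⟨h, ⟨hhH, hhν⟩, -⟩ := hPB ν hνI
    -- h vanishes at all indices ≤ cls g'
    have hzero : ∀ i : Fin n, (i : ℕ) ≤ cls g' → h i = 0 := by
      intro i hi
      have := hhν.1 i
      simp only [hνdef, if_pos hi] at this
      omega
    -- cls h > cls g'
    have hclsh : cls g' < cls h := by
      rcases lt_or_ge (cls h) (k : ℕ) with hc | hc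
      · have hνk : ν k = m' k := by
          simp only [hνdef, if_neg (by omega : ¬ (k : ℕ) ≤ cls g')]
        have hhk : h k ≠ 0 := by
          have := hhν.2 k hc
          omega
        obtain ⟨hcn, hcne⟩ := cls_spec h k hhk
        by_contra hcon
        exact hcne (hzero ⟨cls h, hcn⟩ (by simp only [Fin.val_mk]; omega))
      · omega
    -- h involutively divides m'
    have hhm' : InvDvd h m' := by
      refine ⟨fun i => (hhν.1 i).trans (hνle i), fun i hi => ?_⟩
      have := hhν.2 i hi
      simp only [hνdef, if_neg (by omega : ¬ (i : ℕ) ≤ cls g')] at this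
      omega
    have heq : h = g' := (hPB m' hm'I).unique ⟨hhH, hhm'⟩ ⟨hg', hdm'⟩
    exact hq'ne (heq ▸ hzero ⟨cls g', hq'n⟩ le_rfl)
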